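/- Let Λ be an Artin algebra and C a subcategory of mod Λ with Φ-dim(C) = n < ∞. If fin.dim(add Ω^t C) < ∞ for some t ≥ n, then Ψ-dim(C) < ∞; moreover Ψ-dim(C) ≤ fin.dim(add Ω^t C) + t. -/

import Mathlib

open scoped Classical

/-- An abstract model of the category `mod Λ` of finitely generated left modules over
an Artin algebra `Λ`, presented through the Krull–Schmidt theorem: a finitely
generated module is (the isomorphism class of) a finite multiset of indecomposable
modules.  The data records which indecomposables are projective, and the multiset of
indecomposable direct summands of the syzygy of each indecomposable (the kernel of a
projective cover). -/
structure ModData where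
  /-- iso classes of indecomposable finitely generated modules -/
  Idec : Type
  /-- which indecomposables are projective -/
  proj : Idec → Prop
  /-- the syzygy of an indecomposable -/
  syz : Idec → Multiset Idec

namespace ModData

variable (Λ : ModData)

/-- finitely generated `Λ`-modules (multisets of indecomposables) -/
abbrev Mod := Multiset Λ.Idec

/-- the syzygy operator `Ω` (extended additively) -/
def Ω (X : Λ.Mod) : Λ.Mod := X.bind Λ.syz

/-- `X` is a projective module -/
def IsProj (X : Λ.Mod) : Prop := ∀ i ∈ X, Λ.proj i

/-- the projective dimension `pd X ∈ ℕ∞`: the least `m` with `Ω^[m] X` projective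
(and `⊤` if there is no such `m`) -/
noncomputable def pd (X : Λ.Mod) : ℕ∞ :=
  sInf ((fun m : ℕ => (m : ℕ∞)) '' {m : ℕ | Λ.IsProj (Λ.Ω^[m] X)})

/-- the free abelian group `K` on the iso classes of indecomposable non-projective
finitely generated modules -/
abbrev K := FreeAbelianGroup {i : Λ.Idec // ¬ Λ.proj i}

/-- the class `[X]` of an indecomposable in `K` (projectives are sent to `0`) -/
noncomputable def cls (i : Λ.Idec) : Λ.K :=
  if h : Λ.proj i then 0 else FreeAbelianGroup.of ⟨i, h⟩

/-- the class `[X] ∈ K` of a module `X` -/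
noncomputable def clsM (X : Λ.Mod) : Λ.K := (X.map Λ.cls).sum

/-- the endomorphism `L` of `K` with `L [X] = [Ω X]` -/
noncomputable def L : Λ.K →+ Λ.K :=
  FreeAbelianGroup.lift fun i => Λ.clsM (Λ.syz i.1)

/-- `⟨X⟩` : the subgroup of `K` generated by the classes of the indecomposable
non-projective direct summands of `X` -/
def gen (X : Λ.Mod) : AddSubgroup Λ.K :=
  AddSubgroup.closure (Λ.cls '' {i | i ∈ X})

/-- the rank of a subgroup of `K` -/
noncomputable def rk (H : AddSubgroup Λ.K) : Cardinal :=
  Module.rank ℤ (AddSubgroup.toIntSubmodule H)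

/-- the iterated image `L^k H` of a subgroup of `K` -/
noncomputable def Lpow (k : ℕ) (H : AddSubgroup Λ.K) : AddSubgroup Λ.K :=
  (fun H' => AddSubgroup.map Λ.L H')^[k] H

/-- the (first) Igusa–Todorov function
`Φ(X) = min {n | rk L^k⟨X⟩ = rk L^(k+1)⟨X⟩ for all k ≥ n}` -/
noncomputable def Phi (X : Λ.Mod) : ℕ :=
  sInf {n : ℕ | ∀ k, n ≤ k →
    Λ.rk (Λ.Lpow k (Λ.gen X)) = Λ.rk (Λ.Lpow (k + 1) (Λ.gen X))}

/-- `add C` : the closure of a class of modules under finite direct sums and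
direct summands -/
def addCl (C : Set Λ.Mod) : Set Λ.Mod :=
  {X | ∃ Y ∈ AddSubmonoid.closure C, X ≤ Y}

/-- `C ⊕ D` : the class of direct sums of a module of `C` and a module of `D` -/
def oplus (C D : Set Λ.Mod) : Set Λ.Mod :=
  {X | ∃ Y ∈ C, ∃ Z ∈ D, X = Y + Z}

/-- the finitistic dimension of a class:
`fin.dim C = sup {pd X | X ∈ C, pd X < ∞}` -/
noncomputable def findim (C : Set Λ.Mod) : ℕ∞ :=
  sSup (Λ.pd '' {X | X ∈ C ∧ Λ.pd X ≠ ⊤})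

/-- the (second) Igusa–Todorov function
`Ψ(X) = Φ(X) + fin.dim (add Ω^(Φ X) X)` -/
noncomputable def Psi (X : Λ.Mod) : ℕ∞ :=
  (Λ.Phi X : ℕ∞) + Λ.findim (Λ.addCl {Λ.Ω^[Λ.Phi X] X})

/-- the `Φ`-dimension of a class -/
noncomputable def PhiDim (C : Set Λ.Mod) : ℕ∞ := ⨆ X ∈ C, (Λ.Phi X : ℕ∞)

/-- the `Ψ`-dimension of a class -/
noncomputable def PsiDim (C : Set Λ.Mod) : ℕ∞ := ⨆ X ∈ C, Λ.Psi X

/-- `C` is an `(n,t,V,D)`-GLIT class, relative to the relation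
`ses X₁ X₀ Z` ↔ "there is a short exact sequence `0 → X₁ → X₀ → Z → 0`":
`D` is additively closed, `t`-syzygy invariant with `Φ`-dim`(D) < ∞`, and every
`C ∈ 𝒞` admits a s.e.s. `0 → V₁ ⊕ D₁ → V₀ ⊕ D₀ → Ω^n C → 0` with `Vᵢ ∈ add V`,
`Dᵢ ∈ D`. -/
def IsGLIT (ses : Λ.Mod → Λ.Mod → Λ.Mod → Prop) (C : Set Λ.Mod)
    (n t : ℕ) (V : Λ.Mod) (D : Set Λ.Mod) : Prop :=
  1 ≤ t ∧ Λ.addCl D = D ∧ (∀ X ∈ D, Λ.Ω^[t] X ∈ D) ∧ Λ.PhiDim D ≠ ⊤ ∧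
    ∀ X ∈ C, ∃ V₁ ∈ Λ.addCl {V}, ∃ V₀ ∈ Λ.addCl {V}, ∃ D₁ ∈ D, ∃ D₀ ∈ D,
      ses (V₁ + D₁) (V₀ + D₀) (Λ.Ω^[n] X)

/-- the subgroup of `K` generated by the classes of the summands of modules of `D` -/
noncomputable def relSub (D : Set Λ.Mod) : AddSubgroup Λ.K :=
  AddSubgroup.closure (Λ.cls '' {i | ∃ X ∈ D, i ∈ X})

/-- the rank of (the image of) a subgroup of `K` in the quotient of `K` by the
classes of modules of `D` -/
noncomputable def rkRel (D : Set Λ.Mod) (H : AddSubgroup Λ.K) : Cardinal :=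
  Module.rank ℤ
    ((AddSubgroup.toIntSubmodule H).map (AddSubgroup.toIntSubmodule (Λ.relSub D)).mkQ)

/-- the generalized Igusa–Todorov function `Φ_{[D]}` relative to a class `D`:
defined as `Φ`, but with ranks computed in the quotient of `K` by the subgroup
generated by the classes of modules in `D` (and of projectives) -/
noncomputable def PhiRel (D : Set Λ.Mod) (X : Λ.Mod) : ℕ :=
  sInf {n : ℕ | ∀ k, n ≤ k →
    Λ.rkRel D (Λ.Lpow k (Λ.gen X)) = Λ.rkRel D (Λ.Lpow (k + 1) (Λ.gen X))}

end ModData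

namespace ModData
variable (Λ : ModData)

lemma Ω_add' (X Y : Λ.Mod) : Λ.Ω (X + Y) = Λ.Ω X + Λ.Ω Y := Multiset.add_bind _ _ _

lemma Ω_iter_add (k : ℕ) (X Y : Λ.Mod) :
    Λ.Ω^[k] (X + Y) = Λ.Ω^[k] X + Λ.Ω^[k] Y := by
  induction k generalizing X Y with
  | zero => rfl
  | succ k ih => simp only [Function.iterate_succ_apply, Λ.Ω_add', ih]

lemma Ω_iter_mono (k : ℕ) {X Y : Λ.Mod} (h : X ≤ Y) : Λ.Ω^[k] X ≤ Λ.Ω^[k] Y := by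
  obtain ⟨W, rfl⟩ := Multiset.le_iff_exists_add.mp h
  rw [Λ.Ω_iter_add]
  exact le_add_right le_rfl

lemma Ω_iter_nsmul (k c : ℕ) (X : Λ.Mod) : Λ.Ω^[k] (c • X) = c • Λ.Ω^[k] X := by
  induction c with
  | zero =>
      simp only [zero_smul]
      induction k with
      | zero => rfl
      | succ k ih =>
          rw [Function.iterate_succ_apply, show Λ.Ω 0 = 0 from Multiset.zero_bind _, ih]
  | succ c ih => rw [succ_nsmul, Λ.Ω_iter_add, ih, succ_nsmul]

lemma pd_le_of_isProj {X : Λ.Mod} {m : ℕ} (h : Λ.IsProj (Λ.Ω^[m] X)) :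
    Λ.pd X ≤ (m : ℕ∞) := sInf_le ⟨m, h, rfl⟩

lemma exists_of_pd_ne_top {X : Λ.Mod} (h : Λ.pd X ≠ ⊤) :
    ∃ m : ℕ, Λ.pd X = (m : ℕ∞) ∧ Λ.IsProj (Λ.Ω^[m] X) := by
  have hne : {m : ℕ | Λ.IsProj (Λ.Ω^[m] X)}.Nonempty := by
    by_contra hc
    rw [Set.not_nonempty_iff_eq_empty] at hc
    exact h (by simp [pd, hc])
  refine ⟨sInf {m : ℕ | Λ.IsProj (Λ.Ω^[m] X)},
    le_antisymm (Λ.pd_le_of_isProj (Nat.sInf_mem hne)) ?_, Nat.sInf_mem hne⟩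
  refine le_sInf ?_
  rintro x ⟨m', hm', rfl⟩
  show (↑(sInf {m : ℕ | Λ.IsProj (Λ.Ω^[m] X)}) : ℕ∞) ≤ (m' : ℕ∞)
  exact_mod_cast Nat.sInf_le hm'

end ModData

/-- if `Φ-dim C = n < ∞` and `fin.dim (add Ω^t C) < ∞` for some
`t ≥ n`, then `Ψ-dim C < ∞`; moreover `Ψ-dim C ≤ fin.dim (add Ω^t C) + t`. -/
theorem PsiDim_finite_of_findim_syzygies_finite (Λ : ModData) (C : Set Λ.Mod)
    (n : ℕ) (hn : Λ.PhiDim C = (n : ℕ∞)) (t : ℕ) (hnt : n ≤ t)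
    (hfd : Λ.findim (Λ.addCl (Λ.Ω^[t] '' C)) ≠ ⊤) :
    Λ.PsiDim C ≠ ⊤ ∧ Λ.PsiDim C ≤ Λ.findim (Λ.addCl (Λ.Ω^[t] '' C)) + t := by
  set F := Λ.findim (Λ.addCl (Λ.Ω^[t] '' C)) with hF
  have key : ∀ X ∈ C, Λ.Psi X ≤ F + t := by
    intro X hX
    have hφ : Λ.Phi X ≤ t := by
      have h1 : (Λ.Phi X : ℕ∞) ≤ Λ.PhiDim C :=
        le_iSup₂ (f := fun X (_ : X ∈ C) => (Λ.Phi X : ℕ∞)) X hX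
      rw [hn] at h1
      exact le_trans (by exact_mod_cast h1) hnt
    set φ := Λ.Phi X with hφdef
    set k := t - φ with hk
    have hkφ : k + φ = t := Nat.sub_add_cancel hφ
    have hbound : Λ.findim (Λ.addCl {Λ.Ω^[φ] X}) ≤ F + (k : ℕ∞) := by
      refine sSup_le ?_
      rintro b ⟨Y, ⟨hY, hpd⟩, rfl⟩
      obtain ⟨m, hm, hproj⟩ := Λ.exists_of_pd_ne_top hpd
      by_cases hmk : m ≤ k
      · rw [hm]
        exact le_trans (Nat.cast_le.mpr hmk) le_add_self
      · push_neg at hmk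
        have hOmem : Λ.Ω^[k] Y ∈ Λ.addCl (Λ.Ω^[t] '' C) := by
          obtain ⟨Z, hZ, hle⟩ := hY
          obtain ⟨c, rfl⟩ := AddSubmonoid.mem_closure_singleton.mp hZ
          refine ⟨c • Λ.Ω^[t] X, ?_, ?_⟩
          · exact AddSubmonoid.nsmul_mem _ (AddSubmonoid.subset_closure (Set.mem_image_of_mem _ hX)) c
          · calc Λ.Ω^[k] Y ≤ Λ.Ω^[k] (c • Λ.Ω^[φ] X) := Λ.Ω_iter_mono k hle
              _ = c • Λ.Ω^[k] (Λ.Ω^[φ] X) := Λ.Ω_iter_nsmul k c _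
              _ = c • Λ.Ω^[t] X := by rw [← Function.iterate_add_apply, hkφ]
        have hproj' : Λ.IsProj (Λ.Ω^[m - k] (Λ.Ω^[k] Y)) := by
          rw [← Function.iterate_add_apply, Nat.sub_add_cancel hmk.le]
          exact hproj
        have h1 : Λ.pd (Λ.Ω^[k] Y) ≠ ⊤ := by
          intro ht
          have := Λ.pd_le_of_isProj hproj'
          rw [ht] at this
          exact (ENat.coe_lt_top (m - k)).not_ge this
        obtain ⟨m', hm', hproj''⟩ := Λ.exists_of_pd_ne_top h1
        have h2 : Λ.pd (Λ.Ω^[k] Y) ≤ F := le_sSup ⟨_, ⟨hOmem, h1⟩, rfl⟩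
        have h3 : Λ.IsProj (Λ.Ω^[m' + k] Y) := by
          rw [Function.iterate_add_apply]
          exact hproj''
        calc Λ.pd Y ≤ ((m' + k : ℕ) : ℕ∞) := Λ.pd_le_of_isProj h3
          _ = (m' : ℕ∞) + (k : ℕ∞) := by push_cast; rfl
          _ ≤ F + (k : ℕ∞) := add_le_add_left (hm' ▸ h2) _
    calc Λ.Psi X = (φ : ℕ∞) + Λ.findim (Λ.addCl {Λ.Ω^[φ] X}) := rfl
      _ ≤ (φ : ℕ∞) + (F + (k : ℕ∞)) := add_le_add_right hbound _
      _ = F + ((φ : ℕ∞) + (k : ℕ∞)) := by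
          rw [← add_assoc, add_comm (φ : ℕ∞) F, add_assoc]
      _ = F + (t : ℕ∞) := by
          congr 1
          exact_mod_cast congrArg (Nat.cast : ℕ → ℕ∞) (by omega : φ + k = t)
  have hle : Λ.PsiDim C ≤ F + t := iSup₂_le key
  exact ⟨ne_top_of_le_ne_top (WithTop.add_ne_top.mpr ⟨hfd, WithTop.natCast_ne_top t⟩) hle, hle⟩
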